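/- Let f : ℝ → ℝ be nonnegative, lower semicontinuous, and Lebesgue integrable, and suppose there exists x* ∈ ℝ such that f is nondecreasing on (−∞, x*] and nonincreasing on [x*, ∞). Then for every odd integer k ≥ 1, |∫_ℝ f(x)·err(x)^k dx| ≤ (1/(k+1)) · f(x*) · δ^{k+1}. -/

import Mathlib

open MeasureTheory

/-- Greatest element of `F` below `x`. -/
noncomputable def flF (F : Set ℝ) (x : ℝ) : ℝ := sSup (F ∩ Set.Iic x)
/-- Least element of `F` above `x`. -/
noncomputable def ceF (F : Set ℝ) (x : ℝ) : ℝ := sInf (F ∩ Set.Ici x)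

lemma flF_spec {F : Set ℝ} (hF : IsClosed F) {x : ℝ} (hb : ∃ z ∈ F, z ≤ x) :
    flF F x ∈ F ∧ flF F x ≤ x ∧ ∀ z ∈ F, z ≤ x → z ≤ flF F x := by
  obtain ⟨z0, hz0F, hz0⟩ := hb
  have hne : (F ∩ Set.Iic x).Nonempty := ⟨z0, hz0F, hz0⟩
  have hbdd : BddAbove (F ∩ Set.Iic x) := ⟨x, fun y hy => hy.2⟩
  have hmem : flF F x ∈ F ∩ Set.Iic x :=
    (hF.inter isClosed_Iic).csSup_mem hne hbdd
  exact ⟨hmem.1, hmem.2, fun z hz hzx => le_csSup hbdd ⟨hz, hzx⟩⟩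

lemma ceF_spec {F : Set ℝ} (hF : IsClosed F) {x : ℝ} (hb : ∃ z ∈ F, x ≤ z) :
    ceF F x ∈ F ∧ x ≤ ceF F x ∧ ∀ z ∈ F, x ≤ z → ceF F x ≤ z := by
  obtain ⟨z0, hz0F, hz0⟩ := hb
  have hne : (F ∩ Set.Ici x).Nonempty := ⟨z0, hz0F, hz0⟩
  have hbdd : BddBelow (F ∩ Set.Ici x) := ⟨x, fun y hy => hy.2⟩
  have hmem : ceF F x ∈ F ∩ Set.Ici x :=
    (hF.inter isClosed_Ici).csInf_mem hne hbdd
  exact ⟨hmem.1, hmem.2, fun z hz hzx => csInf_le hbdd ⟨hz, hzx⟩⟩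

/-- an open order-connected set of finite measure is an open interval -/
lemma open_ordconn_Ioo {S : Set ℝ} (hS : IsOpen S)
    (hconn : ∀ a ∈ S, ∀ b ∈ S, ∀ y, a ≤ y → y ≤ b → y ∈ S)
    (hfin : volume S ≠ ⊤) (hne : S.Nonempty) : ∃ α β, α ≤ β ∧ S = Set.Ioo α β := by
  obtain ⟨x0, hx0⟩ := hne
  have hba : BddAbove S := by
    by_contra h
    rw [not_bddAbove_iff] at h
    have : Set.Ici x0 ⊆ S := by
      intro y hy
      obtain ⟨b, hbS, hby⟩ := h y
      exact hconn x0 hx0 b hbS y hy hby.le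
    exact hfin (top_le_iff.1 (by calc (⊤:ENNReal) = volume (Set.Ici x0) := (Real.volume_Ici).symm
      _ ≤ volume S := measure_mono this))
  have hbb : BddBelow S := by
    by_contra h
    rw [not_bddBelow_iff] at h
    have : Set.Iic x0 ⊆ S := by
      intro y hy
      obtain ⟨b, hbS, hby⟩ := h y
      exact hconn b hbS x0 hx0 y hby.le hy
    exact hfin (top_le_iff.1 (by calc (⊤:ENNReal) = volume (Set.Iic x0) := (Real.volume_Iic).symm
      _ ≤ volume S := measure_mono this))
  refine ⟨sInf S, sSup S, csInf_le_csSup ⟨x0, hx0⟩ hbb hba, ?_⟩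
  ext y
  constructor
  · intro hy
    obtain ⟨ε, hε, hball⟩ := Metric.isOpen_iff.1 hS y hy
    have h1 : y - ε/2 ∈ S := hball (by
      simp [Real.dist_eq]; rw [abs_of_nonneg hε.le]; linarith)
    have h2 : y + ε/2 ∈ S := hball (by
      simp [Real.dist_eq]; rw [abs_of_nonneg hε.le]; linarith)
    exact ⟨lt_of_le_of_lt (csInf_le hbb h1) (by linarith),
      lt_of_lt_of_le (by linarith) (le_csSup hba h2)⟩
  · rintro ⟨h1, h2⟩
    obtain ⟨a, haS, hay⟩ := (csInf_lt_iff hbb ⟨x0, hx0⟩).1 h1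
    obtain ⟨b, hbS, hyb⟩ := (lt_csSup_iff hba ⟨x0, hx0⟩).1 h2
    exact hconn a haS b hbS y hay.le hyb.le

theorem unimodal_error_int_odd
    (F : Set ℝ) (hF_closed : IsClosed F) (hF_ne : F.Nonempty)
    (hF_below : ∀ x : ℝ, ∃ z ∈ F, z ≤ x) (hF_above : ∀ x : ℝ, ∃ z ∈ F, x ≤ z)
    (rd : ℝ → ℝ) (hrd_meas : Measurable rd)
    (hrd_mem : ∀ x : ℝ, rd x = flF F x ∨ rd x = ceF F x)
    (hrd_near : ∀ x : ℝ, |rd x - x| = min (x - flF F x) (ceF F x - x))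
    (δ : ℝ) (hδ : 0 < δ) (hgap : ∀ x : ℝ, ceF F x - flF F x ≤ 2 * δ)
    (f : ℝ → ℝ) (hf_nonneg : ∀ x, 0 ≤ f x) (hf_lsc : LowerSemicontinuous f)
    (hf_int : Integrable f)
    (xstar : ℝ) (hf_mono : MonotoneOn f (Set.Iic xstar))
    (hf_anti : AntitoneOn f (Set.Ici xstar))
    (k : ℕ) (hk : 1 ≤ k) (hodd : Odd k) :
    |∫ x, f x * (rd x - x) ^ k| ≤ (1 / (k + 1)) * f xstar * δ ^ (k + 1) := by
  -- basic facts about flF / ceF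
  have hfl := fun x => flF_spec hF_closed (hF_below x)
  have hce := fun x => ceF_spec hF_closed (hF_above x)
  set d : ℝ → ℝ := fun x => Metric.infDist x F with hd_def
  have hd_eq : ∀ x, d x = min (x - flF F x) (ceF F x - x) := by
    intro x
    apply le_antisymm
    · apply le_min
      · have := Metric.infDist_le_dist_of_mem (x := x) (hfl x).1
        rwa [Real.dist_eq, abs_of_nonneg (by linarith [(hfl x).2.1])] at this
      · have := Metric.infDist_le_dist_of_mem (x := x) (hce x).1
        rwa [Real.dist_eq, abs_of_nonpos (by linarith [(hce x).2.1]), neg_sub] at this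
    · rw [hd_def]
      simp only [Metric.infDist_eq_iInf]
      have : Nonempty F := hF_ne.to_subtype
      apply le_ciInf
      rintro ⟨z, hz⟩
      rcases le_total z x with h | h
      · have hzf := (hfl x).2.2 z hz h
        rw [Real.dist_eq, abs_of_nonneg (by linarith)]
        exact le_trans (min_le_left _ _) (by linarith)
      · have hzf := (hce x).2.2 z hz h
        rw [Real.dist_eq, abs_of_nonpos (by linarith), neg_sub]
        exact le_trans (min_le_right _ _) (by linarith)
  have hd0 : ∀ x, 0 ≤ d x := fun x => Metric.infDist_nonneg
  have habs : ∀ x, |rd x - x| = d x := fun x => by rw [hrd_near x, hd_eq x]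
  have hdδ : ∀ x, d x ≤ δ := by
    intro x
    rw [hd_eq x]
    have := hgap x
    rcases le_total (x - flF F x) (ceF F x - x) with h | h
    · rw [min_eq_left h]; linarith
    · rw [min_eq_right h]; linarith
  -- gap structure
  have hFgap : ∀ x, ∀ z ∈ F, z ∉ Set.Ioo (flF F x) (ceF F x) := by
    intro x z hz hzo
    rcases le_total z x with h | h
    · exact absurd ((hfl x).2.2 z hz h) (not_le.2 hzo.1)
    · exact absurd ((hce x).2.2 z hz h) (not_le.2 hzo.2)
  have hgap_loc : ∀ x, ∀ y ∈ Set.Ioo (flF F x) (ceF F x), flF F y = flF F x ∧ ceF F y = ceF F x := by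
    intro x y hy
    constructor
    · refine IsGreatest.csSup_eq ⟨⟨(hfl x).1, hy.1.le⟩, ?_⟩
      rintro z ⟨hzF, hzy⟩
      by_contra h
      push_neg at h
      exact hFgap x z hzF ⟨h, lt_of_le_of_lt hzy hy.2⟩
    · refine IsLeast.csInf_eq ⟨⟨(hce x).1, hy.2.le⟩, ?_⟩
      rintro z ⟨hzF, hzy⟩
      by_contra h
      push_neg at h
      exact hFgap x z hzF ⟨lt_of_lt_of_le hy.1 hzy, h⟩
  -- the antiderivative G
  have hk1 : (0:ℝ) < (k:ℝ) + 1 := by positivity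
  set c : ℝ := δ ^ (k+1) / ((k:ℝ)+1) with hc_def
  set G : ℝ → ℝ := fun x => -(d x)^(k+1) / ((k:ℝ)+1) with hG_def
  have hGcont : Continuous G := (((Metric.continuous_infDist_pt F).pow (k+1)).neg).div_const _
  have hG_nonpos : ∀ x, G x ≤ 0 := by
    intro x
    rw [hG_def]
    have : 0 ≤ (d x)^(k+1) := pow_nonneg (hd0 x) _
    simp only
    apply div_nonpos_of_nonpos_of_nonneg (by linarith) hk1.le
  have hG_ge : ∀ x, -c ≤ G x := by
    intro x
    rw [hG_def, hc_def]
    simp only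
    rw [neg_div, neg_le_neg_iff]
    gcongr
    exacts [hd0 x, hdδ x]
  have hGsub : ∀ α β : ℝ, |G β - G α| ≤ c := by
    intro α β
    have h1 := hG_nonpos α; have h2 := hG_nonpos β
    have h3 := hG_ge α; have h4 := hG_ge β
    rw [abs_le]
    constructor <;> linarith
  -- the a.e. derivative of G
  set e' : ℝ → ℝ := fun x => if x - flF F x < ceF F x - x then (flF F x - x)^k else (ceF F x - x)^k
    with he'_def
  have hdx_F : ∀ x, d x = 0 → flF F x = x ∧ ceF F x = x := by
    intro x hx
    rw [hd_eq x] at hx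
    have h1 := (hfl x).2.1; have h2 := (hce x).2.1
    have hxF : x ∈ F := by
      rcases le_total (x - flF F x) (ceF F x - x) with h | h
      · rw [min_eq_left h] at hx
        have : flF F x = x := by linarith
        exact this ▸ (hfl x).1
      · rw [min_eq_right h] at hx
        have : ceF F x = x := by linarith
        exact this ▸ (hce x).1
    exact ⟨le_antisymm (hfl x).2.1 ((hfl x).2.2 x hxF le_rfl),
      le_antisymm ((hce x).2.2 x hxF le_rfl) (hce x).2.1⟩
  have hderiv : ∀ x, HasDerivWithinAt G (e' x) (Set.Ioi x) x := by
    intro x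
    rcases eq_or_lt_of_le (hd0 x) with hdx | hdx
    · -- x is in F : derivative 0
      obtain ⟨hfx, hcx⟩ := hdx_F x hdx.symm
      have hxF : x ∈ F := hfx ▸ (hfl x).1
      have he'x : e' x = 0 := by
        rw [he'_def]; simp only [hfx, hcx, sub_self, lt_irrefl, if_false]
        exact zero_pow (by omega)
      rw [he'x]
      apply HasDerivAt.hasDerivWithinAt
      have hGx : G x = 0 := by
        rw [hG_def]; simp only [← hdx]
        rw [zero_pow (by omega)]; simp
      rw [hasDerivAt_iff_isLittleO, Asymptotics.isLittleO_iff]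
      intro ε hε
      rw [Metric.eventually_nhds_iff]
      refine ⟨min 1 ε, lt_min one_pos hε, fun y hy => ?_⟩
      rw [Real.dist_eq] at hy
      have h1 : |y - x| < 1 := lt_of_lt_of_le hy (min_le_left _ _)
      have h2 : |y - x| < ε := lt_of_lt_of_le hy (min_le_right _ _)
      have hdy : d y ≤ |y - x| := by
        have := Metric.infDist_le_dist_of_mem (x := y) hxF
        rwa [Real.dist_eq] at this
      rw [hGx]
      simp only [smul_zero, sub_zero, Real.norm_eq_abs]
      have hGy : |G y| = (d y)^(k+1) / ((k:ℝ)+1) := by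
        rw [hG_def]
        rw [abs_div, abs_neg, abs_pow, abs_of_nonneg (hd0 y), abs_of_pos hk1]
      rw [hGy]
      calc (d y)^(k+1)/((k:ℝ)+1) ≤ (d y)^(k+1) :=
            div_le_self (pow_nonneg (hd0 y) _) (by linarith [Nat.cast_nonneg (α := ℝ) k])
        _ ≤ |y - x|^(k+1) := pow_le_pow_left₀ (hd0 y) hdy _
        _ = |y-x|^k * |y-x| := pow_succ _ _
        _ ≤ ε * |y - x| := mul_le_mul_of_nonneg_right
            (le_of_lt (lt_of_le_of_lt (pow_le_of_le_one (abs_nonneg _) h1.le (by omega)) h2))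
            (abs_nonneg _)
    · -- x is in a gap
      have hax : flF F x < x ∧ x < ceF F x := by
        rw [hd_eq x, lt_min_iff] at hdx
        constructor <;> [linarith [hdx.1]; linarith [hdx.2]]
      obtain ⟨ha, hb⟩ := hax
      by_cases hmid : x - flF F x < ceF F x - x
      · -- strictly left of midpoint: round down, full derivative
        have he'x : e' x = (flF F x - x)^k := by rw [he'_def]; exact if_pos hmid
        have hU_mem : Set.Ioo (flF F x) ((flF F x + ceF F x)/2) ∈ nhds x :=
          (isOpen_Ioo).mem_nhds ⟨ha, by linarith⟩
        have hGU : Set.EqOn G (fun y => -(y - flF F x)^(k+1)/((k:ℝ)+1))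
            (Set.Ioo (flF F x) ((flF F x + ceF F x)/2)) := by
          intro y hy
          have hy2 : y ∈ Set.Ioo (flF F x) (ceF F x) := ⟨hy.1, by linarith [hy.2]⟩
          obtain ⟨h1, h2⟩ := hgap_loc x y hy2
          simp only [hG_def]
          rw [hd_eq y, h1, h2, min_eq_left (by linarith [hy.1, hy.2])]
        have hP : HasDerivAt (fun y => -(y - flF F x)^(k+1)/((k:ℝ)+1)) (e' x) x := by
          have hp1 := (((hasDerivAt_id x).sub_const (flF F x)).pow (k+1)).neg.div_const ((k:ℝ)+1)
          refine hp1.congr_deriv (Eq.symm ?_)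
          rw [he'x, show (flF F x - x) = -(x - flF F x) by ring, hodd.neg_pow]
          simp only [Nat.add_sub_cancel, id_eq]
          push_cast
          field_simp
          try ring
        exact (hP.congr_of_eventuallyEq
          (Filter.eventuallyEq_of_mem hU_mem hGU)).hasDerivWithinAt
      · -- at or right of midpoint: round up, right derivative
        have he'x : e' x = (ceF F x - x)^k := by rw [he'_def]; exact if_neg hmid
        push_neg at hmid
        have hGV : Set.EqOn G (fun y => -(ceF F x - y)^(k+1)/((k:ℝ)+1))
            (Set.Ico x (ceF F x)) := by
          intro y hy
          have hy2 : y ∈ Set.Ioo (flF F x) (ceF F x) := ⟨by linarith [hy.1], hy.2⟩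
          obtain ⟨h1, h2⟩ := hgap_loc x y hy2
          simp only [hG_def]
          rw [hd_eq y, h1, h2, min_eq_right (by linarith [hy.1, hy.2.le])]
        have hP : HasDerivAt (fun y => -(ceF F x - y)^(k+1)/((k:ℝ)+1)) (e' x) x := by
          have hp0 : HasDerivAt (fun y : ℝ => ceF F x - y) (-1) x := by
            simpa using (hasDerivAt_id x).const_sub (ceF F x)
          have hp1 := (hp0.pow (k+1)).neg.div_const ((k:ℝ)+1)
          refine hp1.congr_deriv (Eq.symm ?_)
          rw [he'x]
          simp only [Nat.add_sub_cancel]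
          push_cast
          field_simp
          try ring
        have hEq : G =ᶠ[nhdsWithin x (Set.Ioi x)] (fun y => -(ceF F x - y)^(k+1)/((k:ℝ)+1)) :=
          Filter.eventuallyEq_of_mem (Ioo_mem_nhdsGT_of_mem ⟨le_refl x, hb⟩)
            (fun y hy => hGV ⟨hy.1.le, hy.2⟩)
        exact (hP.hasDerivWithinAt).congr_of_eventuallyEq hEq (hGV ⟨le_rfl, hb⟩)
  -- measurability
  have hfl_mono : Monotone (flF F) := by
    intro x y hxy
    obtain ⟨z, hzF, hzx⟩ := hF_below x
    exact csSup_le_csSup ⟨y, fun w hw => hw.2⟩ ⟨z, hzF, hzx⟩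
      (Set.inter_subset_inter_right _ (Set.Iic_subset_Iic.2 hxy))
  have hce_mono : Monotone (ceF F) := by
    intro x y hxy
    obtain ⟨z, hzF, hzx⟩ := hF_above y
    exact csInf_le_csInf ⟨x, fun w hw => hw.2⟩ ⟨z, hzF, hzx⟩
      (Set.inter_subset_inter_right _ (Set.Ici_subset_Ici.2 hxy))
  have hfl_meas : Measurable (flF F) := hfl_mono.measurable
  have hce_meas : Measurable (ceF F) := hce_mono.measurable
  have he'_meas : Measurable e' := by
    rw [he'_def]
    exact Measurable.ite
      (measurableSet_lt (measurable_id.sub hfl_meas) (hce_meas.sub measurable_id))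
      ((hfl_meas.sub measurable_id).pow_const k)
      ((hce_meas.sub measurable_id).pow_const k)
  have he_meas : Measurable (fun x => rd x - x) := hrd_meas.sub measurable_id
  -- a.e. equality of (rd x - x)^k with e'
  have hM_null : volume {x | ¬ (rd x - x)^k = e' x} = 0 := by
    set M := {x : ℝ | 0 < d x ∧ x - flF F x = ceF F x - x} with hM_def
    have hsub : {x | ¬ (rd x - x)^k = e' x} ⊆ M := by
      intro x hx
      by_contra hxM
      apply hx
      simp only [hM_def, Set.mem_setOf_eq, not_and] at hxM
      rcases eq_or_lt_of_le (hd0 x) with hdx | hdx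
      · obtain ⟨hfx, hcx⟩ := hdx_F x hdx.symm
        have hrd0 : rd x - x = 0 := by
          have := habs x; rw [← hdx] at this; exact abs_eq_zero.1 this
        rw [hrd0, he'_def]
        simp only [hfx, hcx, sub_self, lt_irrefl, if_false]
      · have hne := hxM hdx
        have habsx := habs x
        rw [hd_eq x] at habsx
        rcases lt_or_gt_of_ne hne with hlt | hgt
        · have he'x : e' x = (flF F x - x)^k := by rw [he'_def]; exact if_pos hlt
          rw [he'x]
          rcases hrd_mem x with hr | hr
          · rw [hr]
          · exfalso
            rw [hr, abs_of_nonneg (by linarith [(hce x).2.1]), min_eq_left hlt.le] at habsx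
            linarith
        · have he'x : e' x = (ceF F x - x)^k := by
            rw [he'_def]; exact if_neg (by push_neg; linarith)
          rw [he'x]
          rcases hrd_mem x with hr | hr
          · exfalso
            rw [hr, abs_of_nonpos (by linarith [(hfl x).2.1]), min_eq_right hgt.le] at habsx
            linarith
          · rw [hr]
    have hM_count : M.Countable := by
      have hpd : M.PairwiseDisjoint (fun m => Set.Ioo (flF F m) (ceF F m)) := by
        intro m1 h1 m2 h2 hne12
        simp only [Function.onFun]
        rw [Set.disjoint_left]
        intro y hy1 hy2
        obtain ⟨ha1, hb1⟩ := hgap_loc m1 y hy1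
        obtain ⟨ha2, hb2⟩ := hgap_loc m2 y hy2
        apply hne12
        have e1 : m1 = (flF F m1 + ceF F m1)/2 := by linarith [h1.2]
        have e2 : m2 = (flF F m2 + ceF F m2)/2 := by linarith [h2.2]
        rw [e1, e2, ← ha1, ← hb1, ← ha2, ← hb2]
      apply hpd.countable_of_isOpen (fun m _ => isOpen_Ioo)
      intro m hm
      have h0 := hm.1
      rw [hd_eq m, lt_min_iff] at h0
      exact ⟨m, by linarith [h0.1], by linarith [h0.2]⟩
    exact measure_mono_null hsub (hM_count.measure_zero _)
  have hee' : (fun x => (rd x - x)^k) =ᵐ[volume] e' := by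
    rwa [Filter.EventuallyEq, MeasureTheory.ae_iff]
  -- bound on e'
  have he'_bd : ∀ x, ‖e' x‖ ≤ δ^k := by
    intro x
    rw [Real.norm_eq_abs]
    simp only [he'_def]
    split_ifs with h
    · rw [abs_pow]
      apply pow_le_pow_left₀ (abs_nonneg _)
      rw [abs_of_nonpos (by linarith [(hfl x).2.1]), neg_sub]
      have := hdδ x; rw [hd_eq x, min_eq_left h.le] at this; linarith
    · rw [abs_pow]
      apply pow_le_pow_left₀ (abs_nonneg _)
      rw [abs_of_nonneg (by linarith [(hce x).2.1])]
      have := hdδ x; rw [hd_eq x, min_eq_right (by linarith)] at this; linarith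
  -- FTC over bounded open intervals
  have hFTC : ∀ α β : ℝ, α ≤ β → ∫ x in Set.Ioo α β, (rd x - x)^k = G β - G α := by
    intro α β hab
    have hint : IntervalIntegrable e' volume α β := by
      rw [intervalIntegrable_iff]
      have hfin : volume (Set.uIoc α β) < ⊤ := by
        rw [Set.uIoc_of_le hab]; exact measure_Ioc_lt_top
      apply MeasureTheory.Integrable.mono' (g := fun _ : ℝ => δ^k)
        (integrableOn_const hfin.ne)
        he'_meas.aestronglyMeasurable.restrict
      filter_upwards with x
      exact he'_bd x
    have heq : ∫ x in Set.Ioo α β, (rd x - x)^k = ∫ x in α..β, e' x := by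
      calc ∫ x in Set.Ioo α β, (rd x - x)^k
          = ∫ x in Set.Ioo α β, e' x := integral_congr_ae (ae_restrict_of_ae hee')
        _ = ∫ x in Set.Ioc α β, e' x := (MeasureTheory.integral_Ioc_eq_integral_Ioo).symm
        _ = ∫ x in α..β, e' x := (intervalIntegral.integral_of_le hab).symm
    rw [heq]
    exact intervalIntegral.integral_eq_sub_of_hasDeriv_right_of_le hab hGcont.continuousOn
      (fun x _ => hderiv x) hint
  -- f attains its max at xstar
  have hf_max : ∀ x, f x ≤ f xstar := by
    intro x
    rcases le_total x xstar with h | h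
    · exact hf_mono h Set.self_mem_Iic h
    · exact hf_anti Set.self_mem_Ici h h
  have hf_meas : Measurable f := hf_lsc.measurable
  -- layer cake setup
  set A : Set (ℝ × ℝ) := {p | 0 < p.2 ∧ p.2 < f p.1} with hA_def
  have hA_meas : MeasurableSet A :=
    (measurableSet_lt measurable_const measurable_snd).inter
      (measurableSet_lt measurable_snd (hf_meas.comp measurable_fst))
  set Φ : ℝ × ℝ → ℝ := A.indicator (fun p => (rd p.1 - p.1)^k) with hΦ_def
  have hΦ_meas : Measurable Φ :=
    (((he_meas.comp measurable_fst).pow_const k).indicator hA_meas)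
  have hA_slice : ∀ x : ℝ, Prod.mk x ⁻¹' A = Set.Ioo 0 (f x) := fun x => rfl
  have hvolA_fin : (volume.prod volume) A < ⊤ := by
    rw [MeasureTheory.Measure.prod_apply hA_meas]
    calc ∫⁻ x, volume (Prod.mk x ⁻¹' A) = ∫⁻ x, ENNReal.ofReal (f x) := by
          congr 1; funext x; rw [hA_slice x, Real.volume_Ioo, sub_zero]
      _ < ⊤ := hf_int.lintegral_lt_top
  have hg_int : Integrable (A.indicator (fun _ => δ^k)) (volume.prod volume) := by
    rw [integrable_indicator_iff hA_meas]
    exact integrableOn_const hvolA_fin.ne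
  have hΦ_int : Integrable Φ (volume.prod volume) := by
    apply hg_int.mono' hΦ_meas.aestronglyMeasurable
    filter_upwards with p
    rw [hΦ_def]
    by_cases hp : p ∈ A
    · rw [Set.indicator_of_mem hp, Set.indicator_of_mem hp, Real.norm_eq_abs, abs_pow]
      apply pow_le_pow_left₀ (abs_nonneg _)
      rw [habs p.1]
      exact hdδ p.1
    · rw [Set.indicator_of_notMem hp, Set.indicator_of_notMem hp]
      simp
  have hstep1 : ∀ x, ∫ u, Φ (x, u) = f x * (rd x - x)^k := by
    intro x
    have hfun : (fun u => Φ (x, u)) = (Set.Ioo (0:ℝ) (f x)).indicator (fun _ => (rd x - x)^k) := by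
      funext u
      rw [hΦ_def]
      by_cases hu : u ∈ Set.Ioo (0:ℝ) (f x)
      · rw [Set.indicator_of_mem hu, Set.indicator_of_mem (show (x,u) ∈ A from ⟨hu.1, hu.2⟩)]
      · rw [Set.indicator_of_notMem hu, Set.indicator_of_notMem (fun h => hu ⟨h.1, h.2⟩)]
    rw [hfun, MeasureTheory.integral_indicator_const _ measurableSet_Ioo,
      measureReal_def, Real.volume_Ioo, sub_zero, ENNReal.toReal_ofReal (hf_nonneg x), smul_eq_mul]
  set g : ℝ → ℝ := fun u => ∫ x, Φ (x, u) with hg_def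
  have hswap : ∫ x, f x * (rd x - x)^k = ∫ u, g u := by
    calc ∫ x, f x * (rd x - x)^k = ∫ x, ∫ u, Φ (x, u) := by
          congr 1; funext x; rw [hstep1 x]
      _ = ∫ u, ∫ x, Φ (x, u) := MeasureTheory.integral_integral_swap hΦ_int
  have hg_integrable : Integrable g := hΦ_int.integral_prod_right
  set B : ℝ → ℝ := (Set.Ioc (0:ℝ) (f xstar)).indicator (fun _ => c) with hB_def
  have hB_int : Integrable B := by
    rw [hB_def, integrable_indicator_iff measurableSet_Ioc]
    exact integrableOn_const measure_Ioc_lt_top.ne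
  have hgB : ∀ u, |g u| ≤ B u := by
    intro u
    by_cases hu : u ∈ Set.Ioc (0:ℝ) (f xstar)
    case neg =>
      have hzero : ∀ x, Φ (x, u) = 0 := by
        intro x
        rw [hΦ_def]
        apply Set.indicator_of_notMem
        rintro ⟨h1, h2⟩
        exact hu ⟨h1, le_trans h2.le (hf_max x)⟩
      rw [hg_def]
      simp only [hzero, integral_zero]
      rw [hB_def, Set.indicator_of_notMem hu]
      simp
    case pos =>
      rw [hB_def, Set.indicator_of_mem hu]
      set S : Set ℝ := {x | u < f x} with hS_def
      have hS_open : IsOpen S := hf_lsc.isOpen_preimage u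
      have hΦu : (fun x => Φ (x, u)) = S.indicator (fun x => (rd x - x)^k) := by
        funext x
        rw [hΦ_def]
        by_cases hx : x ∈ S
        · rw [Set.indicator_of_mem hx, Set.indicator_of_mem (show (x,u) ∈ A from ⟨hu.1, hx⟩)]
        · rw [Set.indicator_of_notMem hx, Set.indicator_of_notMem (fun h => hx h.2)]
      have hgu : g u = ∫ x in S, (rd x - x)^k := by
        rw [hg_def]; simp only [hΦu]
        exact integral_indicator hS_open.measurableSet
      rcases Set.eq_empty_or_nonempty S with hSe | hSne
      · rw [hgu, hSe]
        simp only [Measure.restrict_empty, integral_zero_measure, abs_zero, hc_def]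
        positivity
      · have hconn : ∀ a ∈ S, ∀ b ∈ S, ∀ y, a ≤ y → y ≤ b → y ∈ S := by
          intro a haS b hbS y hay hyb
          rcases le_total y xstar with h | h
          · exact lt_of_lt_of_le haS (hf_mono (le_trans hay h) h hay)
          · exact lt_of_lt_of_le hbS (hf_anti h (le_trans h hyb) hyb)
        have hfinS : volume S ≠ ⊤ := by
          have h1 : volume S ≤ (∫⁻ a, ENNReal.ofReal (f a)) / ENNReal.ofReal u := by
            refine le_trans (measure_mono ?_)
              (meas_ge_le_lintegral_div hf_meas.ennreal_ofReal.aemeasurable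
                (ENNReal.ofReal_pos.2 hu.1).ne' ENNReal.ofReal_ne_top)
            exact fun x hx => ENNReal.ofReal_le_ofReal (le_of_lt hx)
          refine ne_top_of_le_ne_top ?_ h1
          exact (ENNReal.div_lt_top hf_int.lintegral_lt_top.ne
            (ENNReal.ofReal_pos.2 hu.1).ne').ne
        obtain ⟨α, β, hab, hSeq⟩ := open_ordconn_Ioo hS_open hconn hfinS hSne
        rw [hgu, hSeq, hFTC α β hab]
        exact hGsub α β
  have hBval : ∫ u, B u = f xstar * c := by
    rw [hB_def, MeasureTheory.integral_indicator_const _ measurableSet_Ioc, measureReal_def, Real.volume_Ioc,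
      sub_zero, ENNReal.toReal_ofReal (hf_nonneg xstar), smul_eq_mul]
  calc |∫ x, f x * (rd x - x)^k| = |∫ u, g u| := by rw [hswap]
    _ ≤ ∫ u, |g u| := by
        simpa only [Real.norm_eq_abs] using norm_integral_le_integral_norm g
    _ ≤ ∫ u, B u := integral_mono hg_integrable.abs hB_int hgB
    _ = f xstar * c := hBval
    _ = 1/((k:ℝ)+1) * f xstar * δ^(k+1) := by rw [hc_def]; ring
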